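/- arXiv:2311.09863 — 2 statements merged into one kernel-verified Lean document; each statement's English description precedes it below -/
import Mathlib

section
/- If j is a positive zero of J_0, then (1/j^4) ∫_0^j s^5 J_0(s) ds = -j (1 - 8/j^2)^2 J_0'(j). -/
open MeasureTheory Real Filter

noncomputable def besselJ (n : ℕ) (z : ℝ) : ℝ :=
  ∑' k : ℕ, (-1 : ℝ) ^ k / ((Nat.factorial k : ℝ) * (Nat.factorial (n + k) : ℝ)) * (z / 2) ^ (n + 2 * k)

lemma besselJ_summable (n : ℕ) (t : ℝ) :
    Summable (fun k : ℕ => (-1 : ℝ) ^ k / ((Nat.factorial k : ℝ) * (Nat.factorial (n + k) : ℝ))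
      * (t / 2) ^ (n + 2 * k)) := by
  apply Summable.of_norm
  have h := (Real.summable_pow_div_factorial (|t / 2| ^ 2)).mul_left (|t / 2| ^ n)
  apply h.of_nonneg_of_le (fun k => norm_nonneg _)
  intro k
  have hk : (0 : ℝ) < k.factorial := by positivity
  have hnk : (1 : ℝ) ≤ (n + k).factorial := by
    exact_mod_cast Nat.one_le_iff_ne_zero.mpr (Nat.factorial_ne_zero _)
  rw [Real.norm_eq_abs, abs_mul, abs_div, abs_pow, abs_neg, abs_one, one_pow, abs_mul]
  rw [abs_of_nonneg hk.le, abs_of_nonneg (by linarith : (0:ℝ) ≤ ((n+k).factorial : ℝ))]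
  rw [pow_add, pow_mul]; simp only [abs_mul, abs_pow]
  calc 1 / ((k.factorial : ℝ) * (n + k).factorial) * (|t / 2| ^ n * (|t / 2| ^ 2) ^ k)
      ≤ 1 / (k.factorial : ℝ) * (|t / 2| ^ n * (|t / 2| ^ 2) ^ k) := by
        gcongr
        nlinarith
    _ = |t / 2| ^ n * ((|t / 2| ^ 2) ^ k / k.factorial) := by ring


lemma besselJ_zero_eq (z : ℝ) :
    besselJ 0 z = ∑' k : ℕ, (-1 : ℝ) ^ k / ((Nat.factorial k : ℝ) * (Nat.factorial k : ℝ))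
      * (z / 2) ^ (2 * k) := by
  simp [besselJ]

lemma hasDerivAt_besselJ0 (x : ℝ) : HasDerivAt (besselJ 0) (-(besselJ 1 x)) x := by
  set R : ℝ := |x| + 1 with hR
  have hR1 : 1 ≤ R := by have := abs_nonneg x; linarith
  have hR0 : 0 < R := by linarith
  set f : ℕ → ℝ → ℝ := fun k t =>
    (-1 : ℝ) ^ k / ((Nat.factorial k : ℝ) * (Nat.factorial k : ℝ)) * (t / 2) ^ (2 * k) with hf_def
  set f' : ℕ → ℝ → ℝ := fun k t =>
    (-1 : ℝ) ^ k / ((Nat.factorial k : ℝ) * (Nat.factorial k : ℝ))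
      * ((2 * k : ℕ) * (t / 2) ^ (2 * k - 1) * (1 / 2)) with hf'_def
  set u : ℕ → ℝ := fun k => (2 * R ^ 2) ^ k / k.factorial with hu_def
  have hu : Summable u := Real.summable_pow_div_factorial (2 * R ^ 2)
  have hf : ∀ k (t : ℝ), HasDerivAt (f k) (f' k t) t := by
    intro k t
    have h1 : HasDerivAt (fun t : ℝ => t / 2) (1 / 2) t := (hasDerivAt_id t).div_const 2
    exact (h1.pow (2 * k)).const_mul _
  have habs : ∀ t : ℝ, t ∈ Set.Ioo (-R) R → |t / 2| ≤ R := by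
    intro t ht
    rw [abs_div, abs_two]
    rw [Set.mem_Ioo] at ht
    have : |t| ≤ R := by
      rw [abs_le]; constructor <;> linarith [ht.1, ht.2]
    linarith
  have hbound : ∀ k (t : ℝ), t ∈ Set.Ioo (-R) R → ‖f' k t‖ ≤ u k := by
    intro k t ht
    have h2 : |t| / 2 ≤ R := by
      have := habs t ht; rwa [abs_div, abs_two] at this
    have hk : (0 : ℝ) < k.factorial := by positivity
    have hk1f : (1 : ℝ) ≤ k.factorial := by
      exact_mod_cast Nat.one_le_iff_ne_zero.mpr (Nat.factorial_ne_zero _)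
    have hab : (0:ℝ) ≤ |t| / 2 := by positivity
    calc ‖f' k t‖ = (k : ℝ) * (|t| / 2) ^ (2 * k - 1) / ((k.factorial : ℝ) * k.factorial) := by
          rw [hf'_def]
          simp only [Real.norm_eq_abs, abs_mul, abs_div, abs_pow, abs_neg, abs_one, one_pow,
            Nat.abs_cast, abs_two]
          push_cast
          ring
      _ ≤ ((2:ℝ) ^ k * R ^ (2 * k)) / (k.factorial : ℝ) := by
          apply div_le_div₀ (by positivity) ?_ (by positivity) ?_
          · have hk2 : (k : ℝ) ≤ 2 ^ k := by
              exact_mod_cast (Nat.lt_two_pow_self (n := k)).le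
            have hpow : (|t| / 2) ^ (2 * k - 1) ≤ R ^ (2 * k) := by
              calc (|t| / 2) ^ (2 * k - 1) ≤ R ^ (2 * k - 1) := pow_le_pow_left₀ hab h2 _
                _ ≤ R ^ (2 * k) := pow_le_pow_right₀ hR1 (by omega)
            exact mul_le_mul hk2 hpow (by positivity) (by positivity)
          · nlinarith
      _ = u k := by simp only [hu_def]; rw [mul_pow, pow_mul]
  have h0mem : (0 : ℝ) ∈ Set.Ioo (-R) R := by constructor <;> linarith
  have hxmem : x ∈ Set.Ioo (-R) R := by
    constructor
    · have := neg_abs_le x; linarith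
    · have := le_abs_self x; linarith
  have hf0 : Summable fun k => f k 0 := by
    have := besselJ_summable 0 0
    simpa [hf_def] using this
  have key := hasDerivAt_tsum_of_isPreconnected hu isOpen_Ioo
    (convex_Ioo (-R) R).isPreconnected (fun k y _ => hf k y)
    (fun k y hy => hbound k y hy) h0mem hf0 hxmem
  have hfun : besselJ 0 = fun z => ∑' k, f k z := by
    funext z; exact besselJ_zero_eq z
  rw [hfun]
  refine key.congr_deriv ?_
  -- ∑' k, f' k x = -(besselJ 1 x)  (goal reversed)
  have hsum' : Summable fun k => f' k x :=
    Summable.of_norm_bounded hu (fun k => hbound k x hxmem)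
  rw [Summable.tsum_eq_zero_add hsum']
  have hzero0 : f' 0 x = 0 := by simp [hf'_def]
  rw [hzero0, zero_add, besselJ, ← tsum_neg]
  apply tsum_congr
  intro k
  rw [hf'_def]
  have he : 2 * (k + 1) - 1 = 1 + 2 * k := by omega
  simp only [he, Nat.factorial_succ]
  have h1k : Nat.factorial (1 + k) = (k + 1) * Nat.factorial k := by
    rw [Nat.add_comm 1 k, Nat.factorial_succ]
  rw [h1k]
  have hkf : ((k.factorial : ℝ)) ≠ 0 := by positivity
  have hk1 : ((k : ℝ) + 1) ≠ 0 := by positivity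
  push_cast
  field_simp
  ring


lemma hasDerivAt_mul_besselJ1 (x : ℝ) :
    HasDerivAt (fun t => t * besselJ 1 t) (x * besselJ 0 x) x := by
  set R : ℝ := |x| + 1 with hR
  have hR1 : 1 ≤ R := by have := abs_nonneg x; linarith
  have hR0 : 0 < R := by linarith
  set g : ℕ → ℝ → ℝ := fun k t =>
    (-1 : ℝ) ^ k / ((Nat.factorial k : ℝ) * (Nat.factorial (1 + k) : ℝ))
      * (t * (t / 2) ^ (1 + 2 * k)) with hg_def
  set g' : ℕ → ℝ → ℝ := fun k t =>
    (-1 : ℝ) ^ k / ((Nat.factorial k : ℝ) * (Nat.factorial (1 + k) : ℝ))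
      * (1 * (t / 2) ^ (1 + 2 * k) + t * ((1 + 2 * k : ℕ) * (t / 2) ^ (1 + 2 * k - 1) * (1 / 2)))
      with hg'_def
  set u : ℕ → ℝ := fun k => 2 * R * (2 * R ^ 2) ^ k / k.factorial with hu_def
  have hu : Summable u := by
    have h := (Real.summable_pow_div_factorial (2 * R ^ 2)).mul_left (2 * R)
    exact h.congr fun k => by simp only [hu_def]; ring
  have hg : ∀ k (t : ℝ), HasDerivAt (g k) (g' k t) t := by
    intro k t
    have h1 : HasDerivAt (fun t : ℝ => t / 2) (1 / 2) t := (hasDerivAt_id t).div_const 2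
    exact ((hasDerivAt_id t).mul (h1.pow (1 + 2 * k))).const_mul _
  have hbound : ∀ k (t : ℝ), t ∈ Set.Ioo (-R) R → ‖g' k t‖ ≤ u k := by
    intro k t ht
    rw [Set.mem_Ioo] at ht
    have htR : |t| ≤ R := by rw [abs_le]; constructor <;> linarith [ht.1, ht.2]
    have h2 : |t| / 2 ≤ R := by linarith
    have h2' : |t / 2| ≤ R := by rw [abs_div, abs_two]; exact h2
    have hk : (0 : ℝ) < k.factorial := by positivity
    have hk1f : (1 : ℝ) ≤ k.factorial := by
      exact_mod_cast Nat.one_le_iff_ne_zero.mpr (Nat.factorial_ne_zero _)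
    have hk1f' : (1 : ℝ) ≤ (Nat.factorial (1 + k) : ℝ) := by
      exact_mod_cast Nat.one_le_iff_ne_zero.mpr (Nat.factorial_ne_zero _)
    have hkk : (k : ℝ) + 1 ≤ 2 ^ k := by exact_mod_cast Nat.lt_two_pow_self (n := k)
    have hA : |1 * (t / 2) ^ (1 + 2 * k)| ≤ R ^ (2 * k + 1) := by
      rw [one_mul, abs_pow]
      calc |t / 2| ^ (1 + 2 * k) ≤ R ^ (1 + 2 * k) := pow_le_pow_left₀ (abs_nonneg _) h2' _
        _ = R ^ (2 * k + 1) := by ring_nf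
    have hB : |t * ((1 + 2 * k : ℕ) * (t / 2) ^ (1 + 2 * k - 1) * (1 / 2))|
        ≤ (1 + 2 * k) * R ^ (2 * k + 1) := by
      have he : 1 + 2 * k - 1 = 2 * k := by omega
      rw [he, abs_mul, abs_mul, abs_mul, Nat.abs_cast, abs_pow]
      have h3 : |t / 2| ^ (2 * k) ≤ R ^ (2 * k) := pow_le_pow_left₀ (abs_nonneg _) h2' _
      have h4 : |(1:ℝ)/2| = 1/2 := by norm_num
      rw [h4]
      push_cast
      calc |t| * ((1 + 2 * (k:ℝ)) * |t / 2| ^ (2 * k) * (1 / 2))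
          ≤ R * ((1 + 2 * (k:ℝ)) * R ^ (2 * k) * 1) := by
            have : (1 / 2 : ℝ) ≤ 1 := by norm_num
            gcongr
        _ ≤ (1 + 2 * (k:ℝ)) * R ^ (2 * k + 1) := by rw [pow_succ]; ring_nf; nlinarith [pow_pos hR0 (2*k)]
    calc ‖g' k t‖ ≤ 1 / ((k.factorial : ℝ) * (Nat.factorial (1 + k) : ℝ))
          * (R ^ (2 * k + 1) + (1 + 2 * k) * R ^ (2 * k + 1)) := by
          rw [hg'_def, Real.norm_eq_abs, abs_mul, abs_div, abs_pow, abs_neg, abs_one, one_pow,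
            abs_mul, Nat.abs_cast, Nat.abs_cast]
          apply mul_le_mul_of_nonneg_left ?_ (by positivity)
          exact (abs_add_le _ _).trans (add_le_add hA hB)
      _ ≤ 1 / (k.factorial : ℝ) * ((2 + 2 * k) * R ^ (2 * k + 1)) := by
          have : (R:ℝ) ^ (2*k+1) + (1 + 2*k) * R ^ (2*k+1) = (2 + 2*k) * R ^ (2*k+1) := by ring
          rw [this]
          gcongr
          nlinarith
      _ ≤ u k := by
          simp only [hu_def]
          have h5 : (2:ℝ) + 2*k ≤ 2 * 2^k := by nlinarith
          have h6 : (2 + 2*(k:ℝ)) * R ^ (2*k+1) ≤ 2 * R * (2*R^2)^k := by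
            calc (2 + 2*(k:ℝ)) * R ^ (2*k+1) ≤ (2 * 2^k) * R ^ (2*k+1) :=
                  mul_le_mul_of_nonneg_right h5 (by positivity)
              _ = 2 * R * (2 * R^2)^k := by rw [mul_pow, ← pow_mul, pow_succ]; ring
          calc 1 / (k.factorial:ℝ) * ((2+2*(k:ℝ))*R^(2*k+1))
              ≤ 1/(k.factorial:ℝ) * (2*R*(2*R^2)^k) :=
                mul_le_mul_of_nonneg_left h6 (by positivity)
            _ = 2*R*(2*R^2)^k / k.factorial := by ring
  have h0mem : (0 : ℝ) ∈ Set.Ioo (-R) R := by constructor <;> linarith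
  have hxmem : x ∈ Set.Ioo (-R) R := by
    constructor
    · have := neg_abs_le x; linarith
    · have := le_abs_self x; linarith
  have hg0 : Summable fun k => g k 0 := by
    apply summable_zero.congr
    intro k; simp [hg_def]
  have key := hasDerivAt_tsum_of_isPreconnected hu isOpen_Ioo
    (convex_Ioo (-R) R).isPreconnected (fun k y _ => hg k y)
    (fun k y hy => hbound k y hy) h0mem hg0 hxmem
  have hfun : (fun t => t * besselJ 1 t) = fun z => ∑' k, g k z := by
    funext z
    rw [besselJ, ← tsum_mul_left]
    exact tsum_congr fun k => by simp only [hg_def]; ring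
  rw [hfun]
  refine key.congr_deriv ?_
  -- x * besselJ 0 x = ∑' k, g' k x
  have hJ0 : besselJ 0 x = ∑' k : ℕ, (-1 : ℝ) ^ k / ((Nat.factorial k : ℝ) * (Nat.factorial k : ℝ))
      * (x / 2) ^ (2 * k) := by simp [besselJ]
  rw [hJ0, ← tsum_mul_left]
  apply tsum_congr
  intro k
  rw [hg'_def]
  have he : 1 + 2 * k - 1 = 2 * k := by omega
  simp only [he, one_mul]
  have h1k : Nat.factorial (1 + k) = (k + 1) * Nat.factorial k := by
    rw [Nat.add_comm 1 k, Nat.factorial_succ]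
  rw [h1k]
  have hp : (x / 2) ^ (1 + 2 * k) = (x / 2) * (x / 2) ^ (2 * k) := by
    rw [pow_add, pow_one]
  rw [hp]
  have hkf : ((k.factorial : ℝ)) ≠ 0 := by positivity
  have hk1 : ((k : ℝ) + 1) ≠ 0 := by positivity
  push_cast
  field_simp
  ring


theorem integral_fifth_besselJ_zero (j : ℝ) (hj : 0 < j) (hzero : besselJ 0 j = 0) :
    (1 / j ^ 4) * ∫ s in (0 : ℝ)..j, s ^ 5 * besselJ 0 s
      = -(j * (1 - 8 / j ^ 2) ^ 2 * deriv (besselJ 0) j) := by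
  set H : ℝ → ℝ := fun t =>
    (t ^ 4 - 16 * t ^ 2 + 64) * (t * besselJ 1 t) + (4 * t ^ 4 - 32 * t ^ 2) * besselJ 0 t
    with hH_def
  have hH : ∀ s : ℝ, HasDerivAt H (s ^ 5 * besselJ 0 s) s := by
    intro s
    have h1 := hasDerivAt_mul_besselJ1 s
    have h0 := hasDerivAt_besselJ0 s
    have hp1 : HasDerivAt (fun t : ℝ => t ^ 4 - 16 * t ^ 2 + 64) (4 * s ^ 3 - 32 * s) s := by
      have := ((hasDerivAt_pow 4 s).sub ((hasDerivAt_pow 2 s).const_mul 16)).add_const 64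
      refine this.congr_deriv ?_
      push_cast; ring
    have hp2 : HasDerivAt (fun t : ℝ => 4 * t ^ 4 - 32 * t ^ 2) (16 * s ^ 3 - 64 * s) s := by
      have := ((hasDerivAt_pow 4 s).const_mul 4).sub ((hasDerivAt_pow 2 s).const_mul 32)
      refine this.congr_deriv ?_
      push_cast; ring
    have := (hp1.mul h1).add (hp2.mul h0)
    refine this.congr_deriv ?_
    ring
  have hcont : Continuous (besselJ 0) := by
    have : Differentiable ℝ (besselJ 0) := fun x => (hasDerivAt_besselJ0 x).differentiableAt
    exact this.continuous
  have hInt : IntervalIntegrable (fun s => s ^ 5 * besselJ 0 s) volume 0 j :=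
    (Continuous.mul (by continuity) hcont).intervalIntegrable 0 j
  have hFTC : ∫ s in (0:ℝ)..j, s ^ 5 * besselJ 0 s = H j - H 0 :=
    intervalIntegral.integral_eq_sub_of_hasDerivAt (fun t _ => hH t) hInt
  have hH0 : H 0 = 0 := by simp [hH_def]
  have hHj : H j = (j ^ 4 - 16 * j ^ 2 + 64) * (j * besselJ 1 j) := by
    rw [hH_def]; simp [hzero]
  have hderiv : deriv (besselJ 0) j = -(besselJ 1 j) := (hasDerivAt_besselJ0 j).deriv
  rw [hFTC, hH0, hHj, hderiv, sub_zero]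
  have hj4 : j ^ 4 ≠ 0 := by positivity
  have hj2 : j ^ 2 ≠ 0 := by positivity
  field_simp
  ring
end

section
/- Let λ_n = j_n^2 / (4(1-a_1)) and μ_n = j_n^2 / (4(1-a_2)) with 0 < a_1 < a_2 < 1, and let c_n, d_n be real sequences with c_1 ≠ 0 and Σ |c_n| e^{-λ_n t} < ∞, Σ |d_n| e^{-μ_n t} < ∞ for all t > t_1. If Σ_n c_n e^{-λ_n t} = Σ_n d_n e^{-μ_n t} for all t > t_1, then taking t → ∞ yields a contradiction; hence no such equality can hold with c_1 ≠ 0. In particular a_1 < a_2 is impossible when the two exponential series coincide on (t_1, ∞) and the first coefficient c_1 is nonzero. -/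
open MeasureTheory Real Filter Topology

theorem no_coincidence_of_exponential_series
    (j : ℕ → ℝ) (hmono : StrictMono j) (hpos : ∀ n, 0 < j n)
    (hzero : ∀ n, besselJ 0 (j n) = 0)
    (a₁ a₂ t₁ : ℝ) (ha₁ : 0 < a₁) (ha : a₁ < a₂) (ha₂ : a₂ < 1) (ht₁ : 0 < t₁)
    (c d : ℕ → ℝ) (hc₁ : c 0 ≠ 0)
    (hcsum : ∀ t > t₁, Summable fun n : ℕ => |c n| * Real.exp (-(j n ^ 2 / (4 * (1 - a₁))) * t))
    (hdsum : ∀ t > t₁, Summable fun n : ℕ => |d n| * Real.exp (-(j n ^ 2 / (4 * (1 - a₂))) * t)) :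
    ¬ (∀ t > t₁,
        ∑' n : ℕ, c n * Real.exp (-(j n ^ 2 / (4 * (1 - a₁))) * t)
          = ∑' n : ℕ, d n * Real.exp (-(j n ^ 2 / (4 * (1 - a₂))) * t)) := by
  intro heq
  set lam : ℕ → ℝ := fun n => j n ^ 2 / (4 * (1 - a₁)) with hlam
  set mu : ℕ → ℝ := fun n => j n ^ 2 / (4 * (1 - a₂)) with hmu
  have h1 : (0:ℝ) < 4 * (1 - a₁) := by linarith
  have h2 : (0:ℝ) < 4 * (1 - a₂) := by linarith
  have hjsq : ∀ n, 0 < j n ^ 2 := fun n => pow_pos (hpos n) 2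
  have hjle : ∀ n, j 0 ^ 2 ≤ j n ^ 2 := by
    intro n
    have h : j 0 ≤ j n := hmono.monotone (Nat.zero_le n)
    gcongr
    exact (hpos 0).le
  have hjlt : ∀ n, 0 < n → j 0 ^ 2 < j n ^ 2 := by
    intro n hn
    have h : j 0 < j n := hmono hn
    have h0 : 0 ≤ j 0 := (hpos 0).le
    nlinarith
  have hlam_le : ∀ n, lam 0 ≤ lam n := by
    intro n; simp only [hlam]
    exact div_le_div_of_nonneg_right (hjle n) h1.le
  have hlam_lt : ∀ n, 0 < n → lam 0 < lam n := by
    intro n hn; simp only [hlam]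
    exact div_lt_div_of_pos_right (hjlt n hn) h1
  have hlammu : ∀ n, lam n < mu n := by
    intro n; simp only [hlam, hmu]
    exact div_lt_div_of_pos_left (hjsq n) h2 (by linarith)
  have hlam_mu : ∀ n, lam 0 < mu n := fun n => lt_of_le_of_lt (hlam_le n) (hlammu n)
  set t₀ : ℝ := t₁ + 1 with ht₀
  have ht₀gt : t₀ > t₁ := by simp [ht₀]
  have ht₀pos : 0 < t₀ := by linarith
  -- key term rewriting
  have key : ∀ (e : ℕ → ℝ) (r : ℕ → ℝ) (t : ℝ),
      (fun n => e n * Real.exp ((lam 0 - r n) * t))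
        = fun n => Real.exp (lam 0 * t) * (e n * Real.exp (-(r n) * t)) := by
    intro e r t; funext n
    rw [sub_mul, show (lam 0 * t - r n * t) = lam 0 * t + (-(r n) * t) by ring, Real.exp_add]
    ring
  -- dominated convergence on the c side
  have hC : Tendsto (fun t => ∑' n, c n * Real.exp ((lam 0 - lam n) * t)) atTop
      (𝓝 (c 0)) := by
    have hbd : Summable fun n => |c n| * Real.exp ((lam 0 - lam n) * t₀) := by
      have := (hcsum t₀ ht₀gt).mul_left (Real.exp (lam 0 * t₀))
      refine this.congr fun n => ?_
      rw [show ((lam 0 - lam n) * t₀) = lam 0 * t₀ + (-(lam n) * t₀) by ring, Real.exp_add]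
      ring
    have hlim : ∀ n : ℕ, Tendsto (fun t => c n * Real.exp ((lam 0 - lam n) * t)) atTop
        (𝓝 (if n = 0 then c 0 else 0)) := by
      intro n
      rcases Nat.eq_zero_or_pos n with rfl | hn
      · simp only [sub_self, zero_mul, Real.exp_zero, mul_one, if_pos rfl]
        exact tendsto_const_nhds
      · rw [if_neg (Nat.pos_iff_ne_zero.mp hn)]
        have hneg : lam 0 - lam n < 0 := sub_neg.2 (hlam_lt n hn)
        have : Tendsto (fun t : ℝ => (lam 0 - lam n) * t) atTop atBot :=
          tendsto_id.const_mul_atTop_of_neg hneg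
        simpa using (Real.tendsto_exp_atBot.comp this).const_mul (c n)
    have := tendsto_tsum_of_dominated_convergence (f := fun t n => c n * Real.exp ((lam 0 - lam n) * t))
      (g := fun n => if n = 0 then c 0 else 0) hbd hlim ?_
    · have hts : (∑' n : ℕ, if n = 0 then c 0 else 0) = c 0 := by
        rw [tsum_eq_single 0 (fun b hb => if_neg hb)]; simp
      rwa [hts] at this
    · filter_upwards [eventually_ge_atTop t₀] with t ht n
      rw [Real.norm_eq_abs, abs_mul, abs_of_pos (Real.exp_pos _)]
      refine mul_le_mul_of_nonneg_left (Real.exp_le_exp.2 ?_) (abs_nonneg _)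
      nlinarith [sub_nonneg.2 (hlam_le n), ht₀pos]
  -- dominated convergence on the d side
  have hD : Tendsto (fun t => ∑' n, d n * Real.exp ((lam 0 - mu n) * t)) atTop
      (𝓝 (0 : ℝ)) := by
    have hbd : Summable fun n => |d n| * Real.exp ((lam 0 - mu n) * t₀) := by
      have := (hdsum t₀ ht₀gt).mul_left (Real.exp (lam 0 * t₀))
      refine this.congr fun n => ?_
      rw [show ((lam 0 - mu n) * t₀) = lam 0 * t₀ + (-(mu n) * t₀) by ring, Real.exp_add]
      ring
    have hlim : ∀ n : ℕ, Tendsto (fun t => d n * Real.exp ((lam 0 - mu n) * t)) atTop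
        (𝓝 (0 : ℝ)) := by
      intro n
      have hneg : lam 0 - mu n < 0 := sub_neg.2 (hlam_mu n)
      have : Tendsto (fun t : ℝ => (lam 0 - mu n) * t) atTop atBot :=
        tendsto_id.const_mul_atTop_of_neg hneg
      simpa using (Real.tendsto_exp_atBot.comp this).const_mul (d n)
    have := tendsto_tsum_of_dominated_convergence (f := fun t n => d n * Real.exp ((lam 0 - mu n) * t))
      (g := fun _ => (0 : ℝ)) hbd hlim ?_
    · simpa using this
    · filter_upwards [eventually_ge_atTop t₀] with t ht n
      rw [Real.norm_eq_abs, abs_mul, abs_of_pos (Real.exp_pos _)]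
      refine mul_le_mul_of_nonneg_left (Real.exp_le_exp.2 ?_) (abs_nonneg _)
      nlinarith [sub_nonneg.2 (hlam_mu n).le, ht₀pos]
  -- the two functions agree eventually
  have hev : (fun t => ∑' n, c n * Real.exp ((lam 0 - lam n) * t))
      =ᶠ[atTop] (fun t => ∑' n, d n * Real.exp ((lam 0 - mu n) * t)) := by
    filter_upwards [eventually_gt_atTop t₁] with t ht
    rw [key c lam t, key d mu t, tsum_mul_left, tsum_mul_left, heq t ht]
  have : c 0 = 0 := tendsto_nhds_unique (hC.congr' hev) hD
  exact hc₁ this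
end
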